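/- arXiv:2404.10489 — 2 statements merged into one kernel-verified Lean document; each statement's English description precedes it below -/
import Mathlib

section
/- Let n and M be integers with 0 ≤ n < M and let t > 0 be real. Then 𝓘ₙ(t) = (it)^{n−M} 𝓘_M(t) − i^{n−1} Σ_{l=⌈n/2⌉}^{⌊(M−1)/2⌋} (2l−1)!!/t^{2l−n+1}, where (−1)!! = 1. -/
open MeasureTheory

/-- Probabilists' Hermite polynomial `Heₙ(x) = (−1)ⁿ e^{x²/2} dⁿ/dxⁿ e^{−x²/2}`. -/
noncomputable def He (n : ℕ) (x : ℝ) : ℝ :=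
  (-1) ^ n * Real.exp (x ^ 2 / 2) * iteratedDeriv n (fun y => Real.exp (-(y ^ 2) / 2)) x

/-- `𝓘ₙ(t) = ∫₀^∞ Heₙ(ω) e^{−ω²/2} e^{itω} dω`. -/
noncomputable def calI (n : ℕ) (t : ℝ) : ℂ :=
  ∫ ω in Set.Ioi (0 : ℝ),
    (He n ω : ℂ) * Complex.exp (-(ω : ℂ) ^ 2 / 2) * Complex.exp (Complex.I * (t : ℂ) * (ω : ℂ))

/-- `(2l−1)!! = 1·3·⋯·(2l−1)`, with the convention `(−1)!! = 1` (the case `l = 0`). -/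
def oddDoubleFactorial (l : ℕ) : ℕ := ∏ i ∈ Finset.range l, (2 * i + 1)

open Polynomial Filter

/-- The Hermite polynomial as a real polynomial. -/
noncomputable def Hp (n : ℕ) : ℝ[X] := (hermite n).map (algebraMap ℤ ℝ)

lemma Hp_succ (n : ℕ) : Hp (n + 1) = X * Hp n - derivative (Hp n) := by
  simp only [Hp, hermite_succ, Polynomial.map_sub, Polynomial.map_mul, Polynomial.map_X,
    derivative_map]

lemma aeval_Hp (n : ℕ) (x : ℝ) : aeval x (Hp n) = aeval x (hermite n) := by
  rw [Hp, aeval_map_algebraMap]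

lemma He_eq (n : ℕ) (x : ℝ) : He n x = aeval x (Hp n) := by
  rw [aeval_Hp, He, iteratedDeriv_eq_iterate]
  have h : (fun y : ℝ => Real.exp (-(y ^ 2) / 2)) = fun y => Real.exp (-(y ^ 2 / 2)) := by
    funext y; rw [neg_div]
  rw [h, Polynomial.deriv_gaussian_eq_hermite_mul_gaussian]
  have h2 : Real.exp (x ^ 2 / 2) * Real.exp (-(x ^ 2 / 2)) = 1 := by
    rw [← Real.exp_add]; simp
  have h3 : ((-1 : ℝ) ^ n) * ((-1 : ℝ) ^ n) = 1 := by
    rw [← pow_add]; exact (neg_one_pow_eq_one_iff_even (by norm_num)).2 (Even.add_self n)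
  calc (-1 : ℝ) ^ n * Real.exp (x ^ 2 / 2) *
        ((-1) ^ n * (aeval x) (hermite n) * Real.exp (-(x ^ 2 / 2)))
      = ((-1 : ℝ) ^ n * (-1) ^ n) * (Real.exp (x ^ 2 / 2) * Real.exp (-(x ^ 2 / 2))) *
        (aeval x) (hermite n) := by ring
    _ = (aeval x) (hermite n) := by rw [h2, h3]; ring

lemma pow_gauss_bound (k : ℕ) (x : ℝ) :
    |x| ^ k * Real.exp (-(x ^ 2) / 2) ≤
      (k.factorial * Real.exp 1) * Real.exp (-(1/4) * x ^ 2) := by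
  have h1 : |x| ^ k ≤ k.factorial * Real.exp |x| := by
    have h2 := Real.sum_le_exp_of_nonneg (abs_nonneg x) (k + 1)
    have h3 : |x| ^ k / k.factorial ≤ Real.exp |x| := by
      refine le_trans ?_ h2
      exact Finset.single_le_sum (f := fun i => |x| ^ i / i.factorial)
        (fun i _ => by positivity) (Finset.self_mem_range_succ k)
    calc |x| ^ k = k.factorial * (|x| ^ k / k.factorial) := by
          field_simp
      _ ≤ k.factorial * Real.exp |x| := by
          exact mul_le_mul_of_nonneg_left h3 (by positivity)
  calc |x| ^ k * Real.exp (-(x ^ 2) / 2)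
      ≤ (k.factorial * Real.exp |x|) * Real.exp (-(x ^ 2) / 2) := by
        exact mul_le_mul_of_nonneg_right h1 (Real.exp_pos _).le
    _ = k.factorial * Real.exp (|x| + -(x ^ 2) / 2) := by
        rw [Real.exp_add]; ring
    _ ≤ k.factorial * Real.exp (1 + -(1/4) * x ^ 2) := by
        have : |x| + -(x ^ 2) / 2 ≤ 1 + -(1/4) * x ^ 2 := by
          have := sq_abs x
          nlinarith [sq_nonneg (|x| - 2), sq_nonneg x]
        exact mul_le_mul_of_nonneg_left (Real.exp_le_exp.2 this) (by positivity)
    _ = (k.factorial * Real.exp 1) * Real.exp (-(1/4) * x ^ 2) := by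
        rw [Real.exp_add]; ring

lemma integrable_pow_gauss (k : ℕ) :
    Integrable (fun x : ℝ => x ^ k * Real.exp (-(x ^ 2) / 2)) := by
  have hg := (integrable_exp_neg_mul_sq (by norm_num : (0:ℝ) < 1/4)).const_mul
      ((k.factorial : ℝ) * Real.exp 1)
  refine hg.mono' ?_ ?_
  · exact ((continuous_pow k).mul
      (Real.continuous_exp.comp ((continuous_pow 2).neg.div_const 2))).aestronglyMeasurable
  · filter_upwards with x
    rw [norm_mul, Real.norm_eq_abs, Real.norm_eq_abs, abs_pow, Real.abs_exp]
    exact pow_gauss_bound k x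

lemma aeval_eq_eval' (p : ℝ[X]) (x : ℝ) : aeval x p = p.eval x := by
  simp [coe_aeval_eq_eval]

lemma poly_gauss_expand (p : ℝ[X]) :
    (fun x : ℝ => aeval x p * Real.exp (-(x ^ 2) / 2)) =
      fun x => ∑ i ∈ Finset.range (p.natDegree + 1),
        p.coeff i * (x ^ i * Real.exp (-(x ^ 2) / 2)) := by
  funext x
  rw [aeval_eq_eval', Polynomial.eval_eq_sum_range, Finset.sum_mul]
  simp [mul_assoc]

lemma integrable_poly_gauss (p : ℝ[X]) :
    Integrable (fun x : ℝ => aeval x p * Real.exp (-(x ^ 2) / 2)) := by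
  rw [poly_gauss_expand]
  exact integrable_finset_sum _ fun i _ => (integrable_pow_gauss i).const_mul _

lemma tendsto_pow_gauss (k : ℕ) :
    Tendsto (fun x : ℝ => x ^ k * Real.exp (-(x ^ 2) / 2)) atTop (nhds 0) := by
  apply squeeze_zero' (g := fun x : ℝ => x ^ k * Real.exp (-x))
  · filter_upwards [eventually_ge_atTop (0:ℝ)] with x hx
    positivity
  · filter_upwards [eventually_ge_atTop (2:ℝ)] with x hx
    have h1 : -(x ^ 2) / 2 ≤ -x := by nlinarith
    have h2 : (0:ℝ) ≤ x ^ k := by positivity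
    exact mul_le_mul_of_nonneg_left (Real.exp_le_exp.2 h1) h2
  · exact Real.tendsto_pow_mul_exp_neg_atTop_nhds_zero k

lemma tendsto_poly_gauss (p : ℝ[X]) :
    Tendsto (fun x : ℝ => aeval x p * Real.exp (-(x ^ 2) / 2)) atTop (nhds 0) := by
  rw [poly_gauss_expand]
  have := tendsto_finset_sum (Finset.range (p.natDegree + 1))
    (fun i (_ : i ∈ Finset.range (p.natDegree + 1)) =>
      ((tendsto_pow_gauss i).const_mul (p.coeff i)))
  simpa using this

lemma gauss_hasDerivAt (x : ℝ) : HasDerivAt (fun y : ℝ => Real.exp (-(y ^ 2) / 2))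
    (-x * Real.exp (-(x ^ 2) / 2)) x := by
  have h1 : HasDerivAt (fun y : ℝ => -(y ^ 2) / 2) (-x) x := by
    have := ((hasDerivAt_pow 2 x).neg.div_const 2)
    refine this.congr_deriv ?_
    simp; ring
  simpa [mul_comm] using h1.exp

lemma cexp_hasDerivAt (t ω : ℝ) : HasDerivAt (fun y : ℝ => Complex.exp (Complex.I * t * y))
    (Complex.I * t * Complex.exp (Complex.I * t * ω)) ω := by
  have h : HasDerivAt (fun z : ℂ => Complex.exp (Complex.I * t * z))
      (Complex.exp (Complex.I * t * ω) * (Complex.I * t * 1)) (ω : ℂ) :=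
    ((hasDerivAt_id (ω : ℂ)).const_mul (Complex.I * t)).cexp
  have h2 := h.comp_ofReal
  simp only [mul_one] at h2
  simpa [mul_comm] using h2

lemma fG_hasDerivAt (n : ℕ) (x : ℝ) :
    HasDerivAt (fun y : ℝ => aeval y (Hp n) * Real.exp (-(y ^ 2) / 2))
      (-(aeval x (Hp (n + 1)) * Real.exp (-(x ^ 2) / 2))) x := by
  have h := ((Hp n).hasDerivAt_aeval x).mul (gauss_hasDerivAt x)
  refine h.congr_deriv ?_
  rw [Hp_succ, map_sub, map_mul, aeval_X]
  ring

lemma F_hasDerivAt (n : ℕ) (t x : ℝ) :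
    HasDerivAt (fun y : ℝ =>
        ((aeval y (Hp n) * Real.exp (-(y ^ 2) / 2) : ℝ) : ℂ) *
          Complex.exp (Complex.I * t * y))
      (((-(aeval x (Hp (n + 1)) * Real.exp (-(x ^ 2) / 2)) : ℝ) : ℂ) *
          Complex.exp (Complex.I * t * x) +
        Complex.I * t *
          (((aeval x (Hp n) * Real.exp (-(x ^ 2) / 2) : ℝ) : ℂ) *
            Complex.exp (Complex.I * t * x))) x := by
  have h := ((fG_hasDerivAt n x).ofReal_comp).mul (cexp_hasDerivAt t x)
  refine h.congr_deriv ?_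
  push_cast
  ring

lemma norm_cexp_It (t ω : ℝ) : ‖Complex.exp (Complex.I * t * ω)‖ = 1 := by
  rw [Complex.norm_exp]
  simp [Complex.mul_re]

lemma integrable_polyGauss_cexp (p : ℝ[X]) (t : ℝ) :
    IntegrableOn (fun ω : ℝ =>
      ((aeval ω p * Real.exp (-(ω ^ 2) / 2) : ℝ) : ℂ) * Complex.exp (Complex.I * t * ω))
      (Set.Ioi 0) := by
  refine ((integrable_poly_gauss p).norm.restrict).mono' ?_ ?_
  · apply Continuous.aestronglyMeasurable
    exact (Complex.continuous_ofReal.comp ((p.continuous_aeval).mul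
      (Real.continuous_exp.comp ((continuous_pow 2).neg.div_const 2)))).mul
      (Complex.continuous_exp.comp (by continuity))
  · filter_upwards with ω
    rw [norm_mul, norm_cexp_It, mul_one, Complex.norm_real]

lemma F_tendsto (p : ℝ[X]) (t : ℝ) :
    Tendsto (fun ω : ℝ =>
      ((aeval ω p * Real.exp (-(ω ^ 2) / 2) : ℝ) : ℂ) * Complex.exp (Complex.I * t * ω))
      atTop (nhds 0) := by
  have hg : Tendsto (fun x : ℝ => ‖aeval x p * Real.exp (-(x ^ 2) / 2)‖) atTop (nhds 0) := by
    simpa using (tendsto_poly_gauss p).norm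
  refine squeeze_zero_norm (fun ω => ?_) hg
  rw [norm_mul, norm_cexp_It, mul_one, Complex.norm_real]

lemma calI_eq (n : ℕ) (t : ℝ) : calI n t = ∫ ω in Set.Ioi (0:ℝ),
    ((aeval ω (Hp n) * Real.exp (-(ω ^ 2) / 2) : ℝ) : ℂ) *
      Complex.exp (Complex.I * t * ω) := by
  rw [calI]
  congr 1
  funext ω
  rw [He_eq]
  rw [Complex.ofReal_mul, Complex.ofReal_exp]
  have harg : -(ω:ℂ) ^ 2 / 2 = ((-(ω ^ 2) / 2 : ℝ) : ℂ) := by push_cast; ring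
  rw [harg]

set_option maxHeartbeats 1000000 in
lemma calI_succ (n : ℕ) (t : ℝ) :
    calI (n + 1) t = (aeval (0:ℝ) (Hp n) : ℂ) + Complex.I * t * calI n t := by
  have key := integral_Ioi_of_hasDerivAt_of_tendsto' (a := 0)
    (f := fun y : ℝ =>
      ((aeval y (Hp n) * Real.exp (-(y ^ 2) / 2) : ℝ) : ℂ) *
        Complex.exp (Complex.I * t * y))
    (f' := fun x : ℝ =>
      ((-(aeval x (Hp (n + 1)) * Real.exp (-(x ^ 2) / 2)) : ℝ) : ℂ) *
          Complex.exp (Complex.I * t * x) +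
        Complex.I * t *
          (((aeval x (Hp n) * Real.exp (-(x ^ 2) / 2) : ℝ) : ℂ) *
            Complex.exp (Complex.I * t * x)))
    (fun x _ => F_hasDerivAt n t x) ?_ (F_tendsto (Hp n) t)
  · have h1 : IntegrableOn (fun ω : ℝ =>
        ((aeval ω (Hp (n+1)) * Real.exp (-(ω ^ 2) / 2) : ℝ) : ℂ) *
          Complex.exp (Complex.I * t * ω)) (Set.Ioi 0) := integrable_polyGauss_cexp _ t
    have h2 : IntegrableOn (fun ω : ℝ =>
        ((aeval ω (Hp n) * Real.exp (-(ω ^ 2) / 2) : ℝ) : ℂ) *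
          Complex.exp (Complex.I * t * ω)) (Set.Ioi 0) := integrable_polyGauss_cexp _ t
    have heq : (fun ω : ℝ =>
        ((-(aeval ω (Hp (n+1)) * Real.exp (-(ω ^ 2) / 2)) : ℝ) : ℂ) *
          Complex.exp (Complex.I * t * ω)) = fun ω : ℝ =>
        -(((aeval ω (Hp (n+1)) * Real.exp (-(ω ^ 2) / 2) : ℝ) : ℂ) *
          Complex.exp (Complex.I * t * ω)) := by
      funext ω; push_cast; ring
    have h1' : IntegrableOn (fun ω : ℝ =>
        ((-(aeval ω (Hp (n+1)) * Real.exp (-(ω ^ 2) / 2)) : ℝ) : ℂ) *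
          Complex.exp (Complex.I * t * ω)) (Set.Ioi 0) := by
      rw [heq]; exact h1.neg
    rw [integral_add h1' (h2.const_mul (Complex.I * t)), integral_const_mul] at key
    have e1 : (∫ x in Set.Ioi (0:ℝ),
        ((-(aeval x (Hp (n + 1)) * Real.exp (-(x ^ 2) / 2)) : ℝ) : ℂ) *
          Complex.exp (Complex.I * t * x)) = -calI (n+1) t := by
      rw [calI_eq, ← integral_neg]
      congr 1
      try (funext x; push_cast; ring)
    rw [e1, ← calI_eq n t] at key
    beta_reduce at key
    have e2 : (((aeval (0:ℝ) (Hp n) * Real.exp (-((0:ℝ) ^ 2) / 2) : ℝ) : ℂ) *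
        Complex.exp (Complex.I * t * (0:ℝ))) = (aeval (0:ℝ) (Hp n) : ℂ) := by
      norm_num
    rw [e2] at key
    linear_combination -key
  · apply Integrable.add
    · have heq : (fun ω : ℝ =>
          ((-(aeval ω (Hp (n+1)) * Real.exp (-(ω ^ 2) / 2)) : ℝ) : ℂ) *
            Complex.exp (Complex.I * t * ω)) = fun ω : ℝ =>
          -(((aeval ω (Hp (n+1)) * Real.exp (-(ω ^ 2) / 2) : ℝ) : ℂ) *
            Complex.exp (Complex.I * t * ω)) := by
        funext ω; push_cast; ring
      rw [heq]
      exact (integrable_polyGauss_cexp (Hp (n+1)) t).neg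
    · exact (integrable_polyGauss_cexp (Hp n) t).const_mul _

lemma odf_eq (m : ℕ) : oddDoubleFactorial m = Nat.doubleFactorial (2 * m - 1) := by
  induction m with
  | zero => simp [oddDoubleFactorial]
  | succ m ih =>
    rw [oddDoubleFactorial, Finset.prod_range_succ, ← oddDoubleFactorial, ih]
    rcases Nat.eq_zero_or_pos m with hm | hm
    · subst hm; simp [Nat.doubleFactorial]
    · have h : 2 * (m + 1) - 1 = (2 * m - 1) + 2 := by omega
      rw [h, Nat.doubleFactorial_add_two]
      have h2 : 2 * m - 1 + 2 = 2 * m + 1 := by omega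
      rw [h2]; ring

lemma Hp_zero_val (n : ℕ) : aeval (0:ℝ) (Hp n) = ((hermite n).coeff 0 : ℝ) := by
  rw [Hp, aeval_map_algebraMap]
  have : aeval (0:ℝ) (hermite n) = eval₂ (algebraMap ℤ ℝ) 0 (hermite n) := by
    rw [aeval_def]
  rw [this, eval₂_at_zero]
  simp

lemma Hp_zero_odd (n : ℕ) (hn : Odd n) : aeval (0:ℝ) (Hp n) = 0 := by
  rw [Hp_zero_val, coeff_hermite_of_odd_add (by simpa using hn)]
  simp

lemma Hp_zero_even (m : ℕ) : aeval (0:ℝ) (Hp (2 * m)) = (-1)^m * oddDoubleFactorial m := by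
  have he : Even (2 * m + 0) := by simp [even_two_mul]
  rw [Hp_zero_val, coeff_hermite_of_even_add he, odf_eq]
  have h1 : (2 * m - 0) / 2 = m := by omega
  have h2 : 2 * m - 0 - 1 = 2 * m - 1 := by omega
  rw [h1, h2]
  push_cast
  simp

theorem stmt_3 (n M : ℕ) (hnM : n < M) (t : ℝ) (ht : 0 < t) :
    calI n t = (Complex.I * (t : ℂ)) ^ ((n : ℤ) - (M : ℤ)) * calI M t -
      Complex.I ^ ((n : ℤ) - 1) *
        ∑ l ∈ Finset.Icc ((n + 1) / 2) ((M - 1) / 2),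
          (oddDoubleFactorial l : ℂ) / (t : ℂ) ^ (2 * l - n + 1) := by
  have htC : (t:ℂ) ≠ 0 := Complex.ofReal_ne_zero.2 ht.ne'
  have hIt : Complex.I * (t:ℂ) ≠ 0 := mul_ne_zero Complex.I_ne_zero htC
  induction M, hnM using Nat.le_induction with
  | base =>
    have hcast : ((n:ℤ) - ((n+1 : ℕ) : ℤ)) = -1 := by push_cast; ring
    rw [hcast, zpow_neg_one, calI_succ n t]
    rcases Nat.even_or_odd n with hev | hodd
    · obtain ⟨m, hm⟩ := hev
      have hm' : n = 2 * m := by omega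
      subst hm'
      rw [Hp_zero_even m]
      rw [show (2*m+1)/2 = m from by omega, show (2*m+1-1)/2 = m from by omega,
        Finset.Icc_self, Finset.sum_singleton]
      rw [show 2*m - 2*m + 1 = 1 from by omega, pow_one]
      have hI : Complex.I ^ (((2*m:ℕ):ℤ) - 1) = (-1:ℂ)^m * Complex.I⁻¹ := by
        rw [zpow_sub₀ Complex.I_ne_zero, zpow_one, div_eq_mul_inv]
        congr 1
        rw [zpow_natCast, pow_mul, Complex.I_sq]
      rw [hI, Complex.inv_I]
      push_cast
      field_simp
      ring_nf
      rw [Complex.I_sq]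
      ring
    · rw [Hp_zero_odd n hodd]
      obtain ⟨m, hm⟩ := hodd
      subst hm
      rw [show Finset.Icc ((2*m+1+1)/2) ((2*m+1+1-1)/2) = ∅ from
        Finset.Icc_eq_empty (by omega), Finset.sum_empty]
      push_cast
      field_simp
      ring
  | succ M hM ih =>
    rw [ih, calI_succ M t]
    rcases Nat.even_or_odd M with hev | hodd
    · -- M even, M = 2*(b+1)
      obtain ⟨m, hm⟩ := hev
      have hm' : M = 2 * m := by omega
      obtain ⟨b, rfl⟩ : ∃ b, m = b + 1 := ⟨m - 1, by omega⟩
      subst hm'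
      rw [Hp_zero_even (b+1)]
      rw [show (2*(b+1)+1-1)/2 = b+1 from by omega,
        show (2*(b+1)-1)/2 = b from by omega]
      have hle : (n+1)/2 ≤ b + 1 := by omega
      rw [Finset.sum_Icc_succ_top hle]
      -- zpow manipulations
      have hIe : (Complex.I * (t:ℂ)) ^ ((n:ℤ) - ((2*(b+1)+1 : ℕ) : ℤ)) * (Complex.I * (t:ℂ)) =
          (Complex.I * (t:ℂ)) ^ ((n:ℤ) - ((2*(b+1) : ℕ) : ℤ)) := by
        rw [← zpow_add_one₀ hIt]
        congr 1
        push_cast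
        ring
      have hterm : (Complex.I * (t:ℂ)) ^ ((n:ℤ) - ((2*(b+1)+1 : ℕ) : ℤ)) *
            ((-1:ℂ)^(b+1) * (oddDoubleFactorial (b+1) : ℂ)) =
          Complex.I ^ ((n:ℤ) - 1) *
            ((oddDoubleFactorial (b+1) : ℂ) / (t:ℂ) ^ (2*(b+1) - n + 1)) := by
        rw [mul_zpow]
        have hIi : Complex.I ^ ((n:ℤ) - ((2*(b+1)+1 : ℕ) : ℤ)) =
            Complex.I ^ ((n:ℤ) - 1) * ((-1:ℂ)^(b+1))⁻¹ := by
          have : ((n:ℤ) - ((2*(b+1)+1 : ℕ) : ℤ)) = ((n:ℤ) - 1) + (-(2*(b+1) : ℕ) : ℤ) := by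
            push_cast; ring
          rw [this, zpow_add₀ Complex.I_ne_zero]
          congr 1
          rw [zpow_neg, zpow_natCast, pow_mul, Complex.I_sq]
        have hti : (t:ℂ) ^ ((n:ℤ) - ((2*(b+1)+1 : ℕ) : ℤ)) =
            ((t:ℂ) ^ (2*(b+1) - n + 1 : ℕ))⁻¹ := by
          rw [← zpow_natCast (t:ℂ) (2*(b+1) - n + 1), ← zpow_neg]
          congr 1
          have : n < 2*(b+1) := by omega
          push_cast [Nat.cast_sub (by omega : n ≤ 2*(b+1))]
          ring
        rw [hIi, hti]
        have hne : ((-1:ℂ)^(b+1)) ≠ 0 := pow_ne_zero _ (by norm_num)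
        field_simp
      push_cast
      push_cast at hterm hIe
      linear_combination (-(calI (2*(b+1)) t)) * hIe - hterm
    · -- M odd
      rw [Hp_zero_odd M hodd]
      obtain ⟨m, hm⟩ := hodd
      subst hm
      rw [show (2*m+1+1-1)/2 = (2*m+1-1)/2 from by omega]
      have hIe : (Complex.I * (t:ℂ)) ^ ((n:ℤ) - ((2*m+1+1 : ℕ) : ℤ)) * (Complex.I * (t:ℂ)) =
          (Complex.I * (t:ℂ)) ^ ((n:ℤ) - ((2*m+1 : ℕ) : ℤ)) := by
        rw [← zpow_add_one₀ hIt]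
        congr 1
        push_cast
        ring
      push_cast
      push_cast at hIe
      linear_combination (-(calI (2*m+1) t)) * hIe
end

section
/- For all real r ≥ 0 and ω ≥ 0 there holds |ω J₁(rω) − [(5/128·r⁵ − 3/16·r³ + 1/2·r)·He₀(ω) + (15/128·r⁵ − 3/8·r³ + 1/2·r)·He₂(ω) + (5/128·r⁵ − 1/16·r³)·He₄(ω) + (1/384)·r⁵·He₆(ω)]| ≤ ω⁸ r⁷ / 5040. -/
open MeasureTheory

/-- Bessel function of the first kind of order 1: `J₁(x) = (1/π)∫₀^π cos(φ − x sin φ) dφ`. -/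
noncomputable def J1 (x : ℝ) : ℝ :=
  (1 / Real.pi) * ∫ φ in (0 : ℝ)..Real.pi, Real.cos (φ - x * Real.sin φ)

/-! ### Auxiliary: Taylor-type bounds for sin and cos via repeated integration -/

lemma bessel_key (f g : ℝ → ℝ) (c : ℝ) (n : ℕ) (hf0 : f 0 = 0)
    (hd : ∀ t, HasDerivAt f (g t) t) (hgc : Continuous g)
    (hb : ∀ s, 0 ≤ s → |g s| ≤ c * s ^ n) {t : ℝ} (ht : 0 ≤ t) :
    |f t| ≤ c * t ^ (n + 1) / (n + 1) := by
  have hft : f t = ∫ s in (0:ℝ)..t, g s := by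
    rw [intervalIntegral.integral_eq_sub_of_hasDerivAt (fun s _ => hd s)
      (hgc.intervalIntegrable 0 t), hf0, sub_zero]
  rw [hft]
  have h1 : |∫ s in (0:ℝ)..t, g s| ≤ ∫ s in (0:ℝ)..t, |g s| :=
    intervalIntegral.abs_integral_le_integral_abs ht
  have h2 : (∫ s in (0:ℝ)..t, |g s|) ≤ ∫ s in (0:ℝ)..t, c * s ^ n := by
    apply intervalIntegral.integral_mono_on ht (hgc.abs.intervalIntegrable 0 t)
      ((continuous_const.mul (continuous_pow n)).intervalIntegrable 0 t)
    intro s hs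
    exact hb s hs.1
  have h3 : (∫ s in (0:ℝ)..t, c * s ^ n) = c * t ^ (n + 1) / (n + 1) := by
    rw [intervalIntegral.integral_const_mul, integral_pow]
    ring
  linarith

lemma bessel_sinA1 {t : ℝ} (ht : 0 ≤ t) : |Real.sin t| ≤ t := by
  have := bessel_key Real.sin Real.cos 1 0 Real.sin_zero (Real.hasDerivAt_sin)
    Real.continuous_cos (fun s _ => by simpa using Real.abs_cos_le_one s) ht
  simpa using this

lemma bessel_cosA2 {t : ℝ} (ht : 0 ≤ t) : |Real.cos t - 1| ≤ 1/2 * t ^ 2 := by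
  have := bessel_key (fun t => Real.cos t - 1) (fun t => -Real.sin t) 1 1 (by simp)
    (fun t => (Real.hasDerivAt_cos t).sub_const 1) (Real.continuous_sin.neg)
    (fun s hs => by simpa [abs_neg, mul_comm] using bessel_sinA1 hs) ht
  calc |Real.cos t - 1| ≤ 1 * t ^ (1+1) / (1+1) := by exact_mod_cast this
  _ = 1/2 * t^2 := by ring

lemma bessel_sinA3 {t : ℝ} (ht : 0 ≤ t) : |Real.sin t - t| ≤ 1/6 * t ^ 3 := by
  have := bessel_key (fun t => Real.sin t - t) (fun t => Real.cos t - 1) (1/2) 2 (by simp)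
    (fun t => (Real.hasDerivAt_sin t).sub (hasDerivAt_id t))
    (by continuity) (fun s hs => bessel_cosA2 hs) ht
  calc |Real.sin t - t| ≤ 1/2 * t ^ (2+1) / (2+1) := by exact_mod_cast this
  _ = 1/6 * t^3 := by ring

lemma bessel_cosA4 {t : ℝ} (ht : 0 ≤ t) : |Real.cos t - (1 - t^2/2)| ≤ 1/24 * t ^ 4 := by
  have hd : ∀ t : ℝ, HasDerivAt (fun t : ℝ => Real.cos t - (1 - t^2/2)) (-(Real.sin t - t)) t := by
    intro t
    have h := (Real.hasDerivAt_cos t).sub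
      ((hasDerivAt_const t (1:ℝ)).sub ((hasDerivAt_pow 2 t).div_const 2))
    refine h.congr_deriv ?_; push_cast; ring
  have := bessel_key _ _ (1/6) 3 (by simp) hd (by continuity)
    (fun s hs => by simpa [abs_neg, abs_sub_comm] using bessel_sinA3 hs) ht
  calc |Real.cos t - (1 - t^2/2)| ≤ 1/6 * t ^ (3+1) / (3+1) := by exact_mod_cast this
  _ = 1/24 * t^4 := by ring

lemma bessel_sinA5 {t : ℝ} (ht : 0 ≤ t) : |Real.sin t - (t - t^3/6)| ≤ 1/120 * t ^ 5 := by
  have hd : ∀ t : ℝ, HasDerivAt (fun t : ℝ => Real.sin t - (t - t^3/6))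
      (Real.cos t - (1 - t^2/2)) t := by
    intro t
    have h := (Real.hasDerivAt_sin t).sub
      ((hasDerivAt_id t).sub ((hasDerivAt_pow 3 t).div_const 6))
    refine h.congr_deriv ?_; push_cast; ring
  have := bessel_key _ _ (1/24) 4 (by simp) hd (by continuity) (fun s hs => bessel_cosA4 hs) ht
  calc |Real.sin t - (t - t^3/6)| ≤ 1/24 * t ^ (4+1) / (4+1) := by exact_mod_cast this
  _ = 1/120 * t^5 := by ring

lemma bessel_cosA6 {t : ℝ} (ht : 0 ≤ t) :
    |Real.cos t - (1 - t^2/2 + t^4/24)| ≤ 1/720 * t ^ 6 := by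
  have hd : ∀ t : ℝ, HasDerivAt (fun t : ℝ => Real.cos t - (1 - t^2/2 + t^4/24))
      (-(Real.sin t - (t - t^3/6))) t := by
    intro t
    have h := (Real.hasDerivAt_cos t).sub
      (((hasDerivAt_const t (1:ℝ)).sub ((hasDerivAt_pow 2 t).div_const 2)).add
        ((hasDerivAt_pow 4 t).div_const 24))
    refine h.congr_deriv ?_; push_cast; ring
  have := bessel_key _ _ (1/120) 5 (by simp) hd (by continuity)
    (fun s hs => by simpa [abs_neg, abs_sub_comm] using bessel_sinA5 hs) ht
  calc |Real.cos t - (1 - t^2/2 + t^4/24)| ≤ 1/120 * t ^ (5+1) / (5+1) := by exact_mod_cast this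
  _ = 1/720 * t^6 := by ring

lemma bessel_sinA7 {t : ℝ} (ht : 0 ≤ t) :
    |Real.sin t - (t - t^3/6 + t^5/120)| ≤ 1/5040 * t ^ 7 := by
  have hd : ∀ t : ℝ, HasDerivAt (fun t : ℝ => Real.sin t - (t - t^3/6 + t^5/120))
      (Real.cos t - (1 - t^2/2 + t^4/24)) t := by
    intro t
    have h := (Real.hasDerivAt_sin t).sub
      (((hasDerivAt_id t).sub ((hasDerivAt_pow 3 t).div_const 6)).add
        ((hasDerivAt_pow 5 t).div_const 120))
    refine h.congr_deriv ?_; push_cast; ring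
  have := bessel_key _ _ (1/720) 6 (by simp) hd (by continuity) (fun s hs => bessel_cosA6 hs) ht
  calc |Real.sin t - (t - t^3/6 + t^5/120)| ≤ 1/720 * t ^ (6+1) / (6+1) := by exact_mod_cast this
  _ = 1/5040 * t^7 := by ring

lemma bessel_cosB1 {t : ℝ} (ht : 0 ≤ t) : |Real.cos t - 1| ≤ t := by
  have := bessel_key (fun t => Real.cos t - 1) (fun t => -Real.sin t) 1 0 (by simp)
    (fun t => (Real.hasDerivAt_cos t).sub_const 1) (Real.continuous_sin.neg)
    (fun s _ => by simpa using Real.abs_sin_le_one s) ht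
  simpa using this

lemma bessel_sinB2 {t : ℝ} (ht : 0 ≤ t) : |Real.sin t - t| ≤ 1/2 * t ^ 2 := by
  have := bessel_key (fun t => Real.sin t - t) (fun t => Real.cos t - 1) 1 1 (by simp)
    (fun t => (Real.hasDerivAt_sin t).sub (hasDerivAt_id t))
    (by continuity) (fun s hs => by simpa using bessel_cosB1 hs) ht
  calc |Real.sin t - t| ≤ 1 * t ^ (1+1) / (1+1) := by exact_mod_cast this
  _ = 1/2 * t^2 := by ring

lemma bessel_cosB3 {t : ℝ} (ht : 0 ≤ t) : |Real.cos t - (1 - t^2/2)| ≤ 1/6 * t ^ 3 := by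
  have hd : ∀ t : ℝ, HasDerivAt (fun t : ℝ => Real.cos t - (1 - t^2/2)) (-(Real.sin t - t)) t := by
    intro t
    have h := (Real.hasDerivAt_cos t).sub
      ((hasDerivAt_const t (1:ℝ)).sub ((hasDerivAt_pow 2 t).div_const 2))
    refine h.congr_deriv ?_; push_cast; ring
  have := bessel_key _ _ (1/2) 2 (by simp) hd (by continuity)
    (fun s hs => by simpa [abs_neg, abs_sub_comm] using bessel_sinB2 hs) ht
  calc |Real.cos t - (1 - t^2/2)| ≤ 1/2 * t ^ (2+1) / (2+1) := by exact_mod_cast this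
  _ = 1/6 * t^3 := by ring

lemma bessel_sinB4 {t : ℝ} (ht : 0 ≤ t) : |Real.sin t - (t - t^3/6)| ≤ 1/24 * t ^ 4 := by
  have hd : ∀ t : ℝ, HasDerivAt (fun t : ℝ => Real.sin t - (t - t^3/6))
      (Real.cos t - (1 - t^2/2)) t := by
    intro t
    have h := (Real.hasDerivAt_sin t).sub
      ((hasDerivAt_id t).sub ((hasDerivAt_pow 3 t).div_const 6))
    refine h.congr_deriv ?_; push_cast; ring
  have := bessel_key _ _ (1/6) 3 (by simp) hd (by continuity) (fun s hs => bessel_cosB3 hs) ht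
  calc |Real.sin t - (t - t^3/6)| ≤ 1/6 * t ^ (3+1) / (3+1) := by exact_mod_cast this
  _ = 1/24 * t^4 := by ring

lemma bessel_cosB5 {t : ℝ} (ht : 0 ≤ t) :
    |Real.cos t - (1 - t^2/2 + t^4/24)| ≤ 1/120 * t ^ 5 := by
  have hd : ∀ t : ℝ, HasDerivAt (fun t : ℝ => Real.cos t - (1 - t^2/2 + t^4/24))
      (-(Real.sin t - (t - t^3/6))) t := by
    intro t
    have h := (Real.hasDerivAt_cos t).sub
      (((hasDerivAt_const t (1:ℝ)).sub ((hasDerivAt_pow 2 t).div_const 2)).add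
        ((hasDerivAt_pow 4 t).div_const 24))
    refine h.congr_deriv ?_; push_cast; ring
  have := bessel_key _ _ (1/24) 4 (by simp) hd (by continuity)
    (fun s hs => by simpa [abs_neg, abs_sub_comm] using bessel_sinB4 hs) ht
  calc |Real.cos t - (1 - t^2/2 + t^4/24)| ≤ 1/24 * t ^ (4+1) / (4+1) := by exact_mod_cast this
  _ = 1/120 * t^5 := by ring

lemma bessel_sinB6 {t : ℝ} (ht : 0 ≤ t) :
    |Real.sin t - (t - t^3/6 + t^5/120)| ≤ 1/720 * t ^ 6 := by
  have hd : ∀ t : ℝ, HasDerivAt (fun t : ℝ => Real.sin t - (t - t^3/6 + t^5/120))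
      (Real.cos t - (1 - t^2/2 + t^4/24)) t := by
    intro t
    have h := (Real.hasDerivAt_sin t).sub
      (((hasDerivAt_id t).sub ((hasDerivAt_pow 3 t).div_const 6)).add
        ((hasDerivAt_pow 5 t).div_const 120))
    refine h.congr_deriv ?_; push_cast; ring
  have := bessel_key _ _ (1/120) 5 (by simp) hd (by continuity) (fun s hs => bessel_cosB5 hs) ht
  calc |Real.sin t - (t - t^3/6 + t^5/120)| ≤ 1/120 * t ^ (5+1) / (5+1) := by exact_mod_cast this
  _ = 1/720 * t^6 := by ring

lemma bessel_cosB7 {t : ℝ} (ht : 0 ≤ t) :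
    |Real.cos t - (1 - t^2/2 + t^4/24 - t^6/720)| ≤ 1/5040 * t ^ 7 := by
  have hd : ∀ t : ℝ, HasDerivAt (fun t : ℝ => Real.cos t - (1 - t^2/2 + t^4/24 - t^6/720))
      (-(Real.sin t - (t - t^3/6 + t^5/120))) t := by
    intro t
    have h := (Real.hasDerivAt_cos t).sub
      ((((hasDerivAt_const t (1:ℝ)).sub ((hasDerivAt_pow 2 t).div_const 2)).add
        ((hasDerivAt_pow 4 t).div_const 24)).sub ((hasDerivAt_pow 6 t).div_const 720))
    refine h.congr_deriv ?_; push_cast; ring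
  have := bessel_key _ _ (1/720) 6 (by simp) hd (by continuity)
    (fun s hs => by simpa [abs_neg, abs_sub_comm] using bessel_sinB6 hs) ht
  calc |Real.cos t - (1 - t^2/2 + t^4/24 - t^6/720)| ≤ 1/720 * t ^ (6+1) / (6+1) := by
        exact_mod_cast this
  _ = 1/5040 * t^7 := by ring

/-! ### Auxiliary: values of the Hermite polynomials -/

lemma bessel_gauss_hasDerivAt (y : ℝ) :
    HasDerivAt (fun y : ℝ => Real.exp (-(y ^ 2) / 2)) (-y * Real.exp (-(y ^ 2) / 2)) y := by
  have h : HasDerivAt (fun y : ℝ => -(y ^ 2) / 2) (-y) y := by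
    have := ((hasDerivAt_pow 2 y).neg).div_const 2
    refine this.congr_deriv ?_
    push_cast; ring
  simpa [mul_comm] using h.exp

lemma bessel_hasDerivAt_poly_mul_gauss {p : ℝ → ℝ} {q : ℝ} (y : ℝ) (hp : HasDerivAt p q y) :
    HasDerivAt (fun y => p y * Real.exp (-(y ^ 2) / 2))
      ((q - y * p y) * Real.exp (-(y ^ 2) / 2)) y := by
  have := hp.mul (bessel_gauss_hasDerivAt y)
  refine this.congr_deriv ?_
  ring

lemma bessel_iter1 : iteratedDeriv 1 (fun y : ℝ => Real.exp (-(y ^ 2) / 2))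
    = fun y => (-y) * Real.exp (-(y ^ 2) / 2) := by
  rw [iteratedDeriv_one]
  funext y
  exact (bessel_gauss_hasDerivAt y).deriv

lemma bessel_iter2 : iteratedDeriv 2 (fun y : ℝ => Real.exp (-(y ^ 2) / 2))
    = fun y => (y ^ 2 - 1) * Real.exp (-(y ^ 2) / 2) := by
  rw [iteratedDeriv_succ, bessel_iter1]
  funext y
  have hp : HasDerivAt (fun y : ℝ => -y) (-1) y := (hasDerivAt_id y).neg
  rw [(bessel_hasDerivAt_poly_mul_gauss y hp).deriv]
  ring

lemma bessel_iter3 : iteratedDeriv 3 (fun y : ℝ => Real.exp (-(y ^ 2) / 2))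
    = fun y => (-(y ^ 3) + 3 * y) * Real.exp (-(y ^ 2) / 2) := by
  rw [iteratedDeriv_succ, bessel_iter2]
  funext y
  have hp : HasDerivAt (fun y : ℝ => y ^ 2 - 1) (2 * y) y := by
    have := (hasDerivAt_pow 2 y).sub_const 1
    refine this.congr_deriv ?_; push_cast; ring
  rw [(bessel_hasDerivAt_poly_mul_gauss y hp).deriv]
  ring

lemma bessel_iter4 : iteratedDeriv 4 (fun y : ℝ => Real.exp (-(y ^ 2) / 2))
    = fun y => (y ^ 4 - 6 * y ^ 2 + 3) * Real.exp (-(y ^ 2) / 2) := by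
  rw [iteratedDeriv_succ, bessel_iter3]
  funext y
  have hp : HasDerivAt (fun y : ℝ => -(y ^ 3) + 3 * y) (-(3 * y ^ 2) + 3) y := by
    have := ((hasDerivAt_pow 3 y).neg).add ((hasDerivAt_id y).const_mul 3)
    refine this.congr_deriv ?_; push_cast; ring
  rw [(bessel_hasDerivAt_poly_mul_gauss y hp).deriv]
  ring

lemma bessel_iter5 : iteratedDeriv 5 (fun y : ℝ => Real.exp (-(y ^ 2) / 2))
    = fun y => (-(y ^ 5) + 10 * y ^ 3 - 15 * y) * Real.exp (-(y ^ 2) / 2) := by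
  rw [iteratedDeriv_succ, bessel_iter4]
  funext y
  have hp : HasDerivAt (fun y : ℝ => y ^ 4 - 6 * y ^ 2 + 3) (4 * y ^ 3 - 12 * y) y := by
    have := (((hasDerivAt_pow 4 y).sub ((hasDerivAt_pow 2 y).const_mul 6)).add_const 3)
    refine this.congr_deriv ?_; push_cast; ring
  rw [(bessel_hasDerivAt_poly_mul_gauss y hp).deriv]
  ring

lemma bessel_iter6 : iteratedDeriv 6 (fun y : ℝ => Real.exp (-(y ^ 2) / 2))
    = fun y => (y ^ 6 - 15 * y ^ 4 + 45 * y ^ 2 - 15) * Real.exp (-(y ^ 2) / 2) := by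
  rw [iteratedDeriv_succ, bessel_iter5]
  funext y
  have hp : HasDerivAt (fun y : ℝ => -(y ^ 5) + 10 * y ^ 3 - 15 * y)
      (-(5 * y ^ 4) + 30 * y ^ 2 - 15) y := by
    have := (((hasDerivAt_pow 5 y).neg).add ((hasDerivAt_pow 3 y).const_mul 10)).sub
      ((hasDerivAt_id y).const_mul 15)
    refine this.congr_deriv ?_; push_cast; ring
  rw [(bessel_hasDerivAt_poly_mul_gauss y hp).deriv]
  ring

lemma bessel_expE (ω : ℝ) : Real.exp (ω ^ 2 / 2) * Real.exp (-(ω ^ 2) / 2) = 1 := by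
  rw [← Real.exp_add]; ring_nf; exact Real.exp_zero

lemma bessel_He0 (ω : ℝ) : He 0 ω = 1 := by
  rw [He, iteratedDeriv_zero]
  linear_combination bessel_expE ω

lemma bessel_He2 (ω : ℝ) : He 2 ω = ω ^ 2 - 1 := by
  rw [He, bessel_iter2]
  linear_combination (ω ^ 2 - 1) * bessel_expE ω

lemma bessel_He4 (ω : ℝ) : He 4 ω = ω ^ 4 - 6 * ω ^ 2 + 3 := by
  rw [He, bessel_iter4]
  linear_combination (ω ^ 4 - 6 * ω ^ 2 + 3) * bessel_expE ω

lemma bessel_He6 (ω : ℝ) : He 6 ω = ω ^ 6 - 15 * ω ^ 4 + 45 * ω ^ 2 - 15 := by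
  rw [He, bessel_iter6]
  linear_combination (ω ^ 6 - 15 * ω ^ 4 + 45 * ω ^ 2 - 15) * bessel_expE ω

/-! ### Auxiliary: integral of the Taylor approximation -/

noncomputable def Qfun (x φ : ℝ) : ℝ :=
  Real.cos φ * (1 - (x * Real.sin φ) ^ 2 / 2 + (x * Real.sin φ) ^ 4 / 24
      - (x * Real.sin φ) ^ 6 / 720)
    + Real.sin φ * ((x * Real.sin φ) - (x * Real.sin φ) ^ 3 / 6 + (x * Real.sin φ) ^ 5 / 120)

lemma bessel_hc0 : (∫ φ in (0:ℝ)..Real.pi, Real.cos φ) = 0 := by simp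
lemma bessel_hc2 : (∫ φ in (0:ℝ)..Real.pi, Real.sin φ ^ 2 * Real.cos φ) = 0 := by simp
lemma bessel_hc4 : (∫ φ in (0:ℝ)..Real.pi, Real.sin φ ^ 4 * Real.cos φ) = 0 := by
  simpa using integral_sin_pow_mul_cos_pow_odd (a := 0) (b := Real.pi) 4 0
lemma bessel_hc6 : (∫ φ in (0:ℝ)..Real.pi, Real.sin φ ^ 6 * Real.cos φ) = 0 := by
  simpa using integral_sin_pow_mul_cos_pow_odd (a := 0) (b := Real.pi) 6 0
lemma bessel_hs2 : (∫ φ in (0:ℝ)..Real.pi, Real.sin φ ^ 2) = Real.pi / 2 := by simp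
lemma bessel_hs4 : (∫ φ in (0:ℝ)..Real.pi, Real.sin φ ^ 4) = 3 * Real.pi / 8 := by
  have := integral_sin_pow (a := 0) (b := Real.pi) 2
  norm_num at this
  rw [this]; ring
lemma bessel_hs6 : (∫ φ in (0:ℝ)..Real.pi, Real.sin φ ^ 6) = 5 * Real.pi / 16 := by
  have := integral_sin_pow (a := 0) (b := Real.pi) 4
  norm_num at this
  rw [this, bessel_hs4]; ring

lemma bessel_Qint (x : ℝ) : (∫ φ in (0:ℝ)..Real.pi, Qfun x φ)
    = Real.pi * x / 2 - Real.pi * x ^ 3 / 16 + Real.pi * x ^ 5 / 384 := by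
  have e : ∀ φ : ℝ, Qfun x φ =
      Real.cos φ
        + (-(x ^ 2 / 2)) * (Real.sin φ ^ 2 * Real.cos φ)
        + (x ^ 4 / 24) * (Real.sin φ ^ 4 * Real.cos φ)
        + (-(x ^ 6 / 720)) * (Real.sin φ ^ 6 * Real.cos φ)
        + x * Real.sin φ ^ 2
        + (-(x ^ 3 / 6)) * Real.sin φ ^ 4
        + (x ^ 5 / 120) * Real.sin φ ^ 6 := by
    intro φ; unfold Qfun; ring
  have i1 : IntervalIntegrable (fun φ => Real.cos φ) volume 0 Real.pi := by
    apply Continuous.intervalIntegrable; fun_prop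
  have i2 : IntervalIntegrable (fun φ => (-(x ^ 2 / 2)) * (Real.sin φ ^ 2 * Real.cos φ))
      volume 0 Real.pi := by
    apply Continuous.intervalIntegrable; fun_prop
  have i3 : IntervalIntegrable (fun φ => (x ^ 4 / 24) * (Real.sin φ ^ 4 * Real.cos φ))
      volume 0 Real.pi := by
    apply Continuous.intervalIntegrable; fun_prop
  have i4 : IntervalIntegrable (fun φ => (-(x ^ 6 / 720)) * (Real.sin φ ^ 6 * Real.cos φ))
      volume 0 Real.pi := by
    apply Continuous.intervalIntegrable; fun_prop
  have i5 : IntervalIntegrable (fun φ => x * Real.sin φ ^ 2) volume 0 Real.pi := by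
    apply Continuous.intervalIntegrable; fun_prop
  have i6 : IntervalIntegrable (fun φ => (-(x ^ 3 / 6)) * Real.sin φ ^ 4) volume 0 Real.pi := by
    apply Continuous.intervalIntegrable; fun_prop
  have i7 : IntervalIntegrable (fun φ => (x ^ 5 / 120) * Real.sin φ ^ 6) volume 0 Real.pi := by
    apply Continuous.intervalIntegrable; fun_prop
  rw [intervalIntegral.integral_congr (g := fun φ =>
      Real.cos φ
        + (-(x ^ 2 / 2)) * (Real.sin φ ^ 2 * Real.cos φ)
        + (x ^ 4 / 24) * (Real.sin φ ^ 4 * Real.cos φ)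
        + (-(x ^ 6 / 720)) * (Real.sin φ ^ 6 * Real.cos φ)
        + x * Real.sin φ ^ 2
        + (-(x ^ 3 / 6)) * Real.sin φ ^ 4
        + (x ^ 5 / 120) * Real.sin φ ^ 6) (fun φ _ => e φ)]
  rw [intervalIntegral.integral_add (((((i1.add i2).add i3).add i4).add i5).add i6) i7,
      intervalIntegral.integral_add ((((i1.add i2).add i3).add i4).add i5) i6,
      intervalIntegral.integral_add (((i1.add i2).add i3).add i4) i5,
      intervalIntegral.integral_add ((i1.add i2).add i3) i4,
      intervalIntegral.integral_add (i1.add i2) i3,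
      intervalIntegral.integral_add i1 i2]
  rw [intervalIntegral.integral_const_mul, intervalIntegral.integral_const_mul,
      intervalIntegral.integral_const_mul, intervalIntegral.integral_const_mul,
      intervalIntegral.integral_const_mul, intervalIntegral.integral_const_mul]
  rw [bessel_hc0, bessel_hc2, bessel_hc4, bessel_hc6, bessel_hs2, bessel_hs4, bessel_hs6]
  ring

/-! ### Main estimate for `J1` -/

lemma bessel_J1_est {x : ℝ} (hx : 0 ≤ x) :
    |J1 x - (x/2 - x^3/16 + x^5/384)| ≤ x^7/5040 := by
  have hπ : (0:ℝ) < Real.pi := Real.pi_pos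
  have hgc : Continuous (fun φ : ℝ => Real.cos (φ - x * Real.sin φ)) := by fun_prop
  have hQc : Continuous (Qfun x) := by unfold Qfun; fun_prop
  -- pointwise bound
  have hpt : ∀ φ ∈ Set.Icc (0:ℝ) Real.pi,
      |Real.cos (φ - x * Real.sin φ) - Qfun x φ| ≤ (2 * x ^ 7 / 5040) * Real.sin φ ^ 2 := by
    intro φ hφ
    have hsin0 : 0 ≤ Real.sin φ := Real.sin_nonneg_of_nonneg_of_le_pi hφ.1 hφ.2
    set t := x * Real.sin φ with htdef
    have ht : 0 ≤ t := mul_nonneg hx hsin0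
    have e : Real.cos (φ - t) - Qfun x φ
        = Real.cos φ * (Real.cos t - (1 - t^2/2 + t^4/24 - t^6/720))
          + Real.sin φ * (Real.sin t - (t - t^3/6 + t^5/120)) := by
      rw [Real.cos_sub]; unfold Qfun; rw [← htdef]; ring
    rw [e]
    have h1 := bessel_cosB7 ht
    have h2 := bessel_sinA7 ht
    have hsin7 : Real.sin φ ^ 7 ≤ Real.sin φ ^ 2 :=
      pow_le_pow_of_le_one hsin0 (Real.sin_le_one φ) (by norm_num)
    calc |Real.cos φ * (Real.cos t - (1 - t^2/2 + t^4/24 - t^6/720))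
          + Real.sin φ * (Real.sin t - (t - t^3/6 + t^5/120))|
        ≤ |Real.cos φ * (Real.cos t - (1 - t^2/2 + t^4/24 - t^6/720))|
          + |Real.sin φ * (Real.sin t - (t - t^3/6 + t^5/120))| := abs_add_le _ _
      _ = |Real.cos φ| * |Real.cos t - (1 - t^2/2 + t^4/24 - t^6/720)|
          + |Real.sin φ| * |Real.sin t - (t - t^3/6 + t^5/120)| := by
            rw [abs_mul, abs_mul]
      _ ≤ 1 * (1/5040 * t^7) + 1 * (1/5040 * t^7) :=
            add_le_add
              (mul_le_mul (Real.abs_cos_le_one φ) h1 (abs_nonneg _) zero_le_one)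
              (mul_le_mul (Real.abs_sin_le_one φ) h2 (abs_nonneg _) zero_le_one)
      _ = 2 / 5040 * (x ^ 7 * Real.sin φ ^ 7) := by rw [htdef]; ring
      _ ≤ 2 / 5040 * (x ^ 7 * Real.sin φ ^ 2) := by
            have h7 : 0 ≤ x ^ 7 := pow_nonneg hx 7
            nlinarith [hsin7]
      _ = (2 * x ^ 7 / 5040) * Real.sin φ ^ 2 := by ring
  -- integral bound
  have hdiffc : Continuous (fun φ : ℝ => Real.cos (φ - x * Real.sin φ) - Qfun x φ) :=
    hgc.sub hQc
  have hint : |∫ φ in (0:ℝ)..Real.pi, (Real.cos (φ - x * Real.sin φ) - Qfun x φ)|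
      ≤ Real.pi * x ^ 7 / 5040 := by
    have hb := intervalIntegral.abs_integral_le_integral_abs (μ := volume)
      (f := fun φ : ℝ => Real.cos (φ - x * Real.sin φ) - Qfun x φ) hπ.le
    have hmono : (∫ φ in (0:ℝ)..Real.pi, |Real.cos (φ - x * Real.sin φ) - Qfun x φ|)
        ≤ ∫ φ in (0:ℝ)..Real.pi, (2 * x ^ 7 / 5040) * Real.sin φ ^ 2 := by
      apply intervalIntegral.integral_mono_on hπ.le (hdiffc.abs.intervalIntegrable 0 Real.pi)
        ((continuous_const.mul (Real.continuous_sin.pow 2)).intervalIntegrable 0 Real.pi)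
      exact hpt
    have hval : (∫ φ in (0:ℝ)..Real.pi, (2 * x ^ 7 / 5040) * Real.sin φ ^ 2)
        = (2 * x ^ 7 / 5040) * (Real.pi / 2) := by
      rw [intervalIntegral.integral_const_mul, bessel_hs2]
    have : (2 * x ^ 7 / 5040) * (Real.pi / 2) = Real.pi * x ^ 7 / 5040 := by ring
    linarith
  -- conclude
  have hsub : J1 x - (x/2 - x^3/16 + x^5/384)
      = (1 / Real.pi) * ∫ φ in (0:ℝ)..Real.pi,
          (Real.cos (φ - x * Real.sin φ) - Qfun x φ) := by
    rw [intervalIntegral.integral_sub (hgc.intervalIntegrable 0 Real.pi)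
      (hQc.intervalIntegrable 0 Real.pi), bessel_Qint x, J1]
    field_simp
  rw [hsub, abs_mul]
  have h1 : |1 / Real.pi| = 1 / Real.pi := abs_of_pos (by positivity)
  rw [h1]
  calc (1 / Real.pi) * |∫ φ in (0:ℝ)..Real.pi, (Real.cos (φ - x * Real.sin φ) - Qfun x φ)|
      ≤ (1 / Real.pi) * (Real.pi * x ^ 7 / 5040) := by
        gcongr
      _ = x ^ 7 / 5040 := by field_simp
  
theorem stmt_6 (r ω : ℝ) (hr : 0 ≤ r) (hω : 0 ≤ ω) :
    |ω * J1 (r * ω) -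
        ((5 / 128 * r ^ 5 - 3 / 16 * r ^ 3 + 1 / 2 * r) * He 0 ω +
          (15 / 128 * r ^ 5 - 3 / 8 * r ^ 3 + 1 / 2 * r) * He 2 ω +
          (5 / 128 * r ^ 5 - 1 / 16 * r ^ 3) * He 4 ω +
          1 / 384 * r ^ 5 * He 6 ω)| ≤ ω ^ 8 * r ^ 7 / 5040 := by
  have hx : 0 ≤ r * ω := mul_nonneg hr hω
  have hHe : ((5 / 128 * r ^ 5 - 3 / 16 * r ^ 3 + 1 / 2 * r) * He 0 ω +
          (15 / 128 * r ^ 5 - 3 / 8 * r ^ 3 + 1 / 2 * r) * He 2 ω +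
          (5 / 128 * r ^ 5 - 1 / 16 * r ^ 3) * He 4 ω +
          1 / 384 * r ^ 5 * He 6 ω)
      = ω * ((r * ω)/2 - (r * ω)^3/16 + (r * ω)^5/384) := by
    rw [bessel_He0, bessel_He2, bessel_He4, bessel_He6]
    ring
  rw [hHe, ← mul_sub, abs_mul, abs_of_nonneg hω]
  calc ω * |J1 (r * ω) - ((r * ω)/2 - (r * ω)^3/16 + (r * ω)^5/384)|
      ≤ ω * ((r * ω) ^ 7 / 5040) := by
        gcongr
        exact bessel_J1_est hx
    _ = ω ^ 8 * r ^ 7 / 5040 := by ring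
end
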